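/- Let \Delta \subset \mathbb{R}^2 be a convex polytope all of whose facets are of the form F_\mu = \{x : \langle x, \mu \rangle = 1\} for primitive \mu \in \mathbb{Z}^2, with 0 in the interior of \Delta, and let \Delta^\vee be the convex hull of these primitive normals. Then there is a constant C > 1 such that for every \xi \in \mathbb{Z}^2 \setminus \Delta^\vee, the constant c_\xi defined by the condition that the line \{\langle x, \xi \rangle = c_\xi\} is a supporting line of \Delta (i.e., meets \Delta and \Delta is contained in \{\langle x, \xi \rangle \le c_\xi\}) satisfies c_\xi \ge C. -/

import Mathlib

/-- Let `Δ ⊂ ℝ²` be a compact convex polygon cut out by half-spaces `⟨x, μ⟩ ≤ 1` for a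
finite set of primitive integer normals `μ`, with `0` in the interior, each line
`{⟨x, μ⟩ = 1}` meeting `Δ` (so each is a facet), and let `Δ^∨` be the convex hull of the
normals. Then there is a constant `C > 1` such that for every lattice vector
`ξ ∈ ℤ² \ Δ^∨`, the value `c_ξ = max_{x ∈ Δ} ⟨x, ξ⟩` satisfies `c_ξ ≥ C`. -/
theorem support_value_lower_bound (s : Finset (ℤ × ℤ)) (hne : s.Nonempty)
    (hprim : ∀ μ ∈ s, Int.gcd μ.1 μ.2 = 1)
    (Δ : Set (ℝ × ℝ))
    (hΔ : Δ = {x : ℝ × ℝ | ∀ μ ∈ s, x.1 * (μ.1 : ℝ) + x.2 * (μ.2 : ℝ) ≤ 1})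
    (hcomp : IsCompact Δ)
    (h0 : ((0 : ℝ), (0 : ℝ)) ∈ interior Δ)
    (hfacet : ∀ μ ∈ s, ∃ x ∈ Δ, x.1 * (μ.1 : ℝ) + x.2 * (μ.2 : ℝ) = 1) :
    ∃ C : ℝ, 1 < C ∧ ∀ ξ : ℤ × ℤ,
      ((ξ.1 : ℝ), (ξ.2 : ℝ)) ∉
          convexHull ℝ ((s.image fun μ : ℤ × ℤ => ((μ.1 : ℝ), (μ.2 : ℝ)) :
            Finset (ℝ × ℝ)) : Set (ℝ × ℝ)) →
      C ≤ sSup ((fun x : ℝ × ℝ => x.1 * (ξ.1 : ℝ) + x.2 * (ξ.2 : ℝ)) '' Δ) := by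
  classical
  set P : Set (ℝ × ℝ) :=
    (convexHull ℝ ((s.image fun μ : ℤ × ℤ => ((μ.1 : ℝ), (μ.2 : ℝ)) :
      Finset (ℝ × ℝ)) : Set (ℝ × ℝ))) with hPdef
  set c : ℤ × ℤ → ℝ :=
    fun ξ => sSup ((fun x : ℝ × ℝ => x.1 * (ξ.1 : ℝ) + x.2 * (ξ.2 : ℝ)) '' Δ) with hcdef
  have hcont : ∀ ξ : ℤ × ℤ, Continuous fun x : ℝ × ℝ => x.1 * (ξ.1 : ℝ) + x.2 * (ξ.2 : ℝ) := by
    intro ξ; fun_prop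
  have hle : ∀ (ξ : ℤ × ℤ) (x : ℝ × ℝ), x ∈ Δ → x.1 * (ξ.1 : ℝ) + x.2 * (ξ.2 : ℝ) ≤ c ξ := by
    intro ξ x hx
    exact le_csSup ((hcomp.image (hcont ξ)).bddAbove) ⟨x, hx, rfl⟩
  obtain ⟨R, hR⟩ := isBounded_iff_forall_norm_le.mp hcomp.isBounded
  -- membership of normals in P
  have hmemP : ∀ μ ∈ s, ((μ.1 : ℝ), (μ.2 : ℝ)) ∈ P := by
    intro μ hμ
    apply subset_convexHull ℝ _
    simp only [Finset.coe_image, Set.mem_image, Finset.mem_coe]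
    exact ⟨μ, hμ, rfl⟩
  -- key separation lemma
  have key : ∀ ξ : ℤ × ℤ, ((ξ.1 : ℝ), (ξ.2 : ℝ)) ∉ P → 1 < c ξ := by
    intro ξ hξ
    have hPconv : Convex ℝ P := convex_convexHull ℝ _
    have hPclosed : IsClosed P :=
      ((s.image fun μ : ℤ × ℤ => ((μ.1 : ℝ), (μ.2 : ℝ))).finite_toSet.isCompact_convexHull (𝕜 := ℝ)).isClosed
    obtain ⟨f, u, hfu, hux⟩ := geometric_hahn_banach_closed_point hPconv hPclosed hξ
    set v : ℝ × ℝ := (f (1, 0), f (0, 1)) with hv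
    have hfeval : ∀ y : ℝ × ℝ, f y = y.1 * v.1 + y.2 * v.2 := by
      intro y
      have hy : y = y.1 • ((1 : ℝ), (0 : ℝ)) + y.2 • ((0 : ℝ), (1 : ℝ)) := by
        simp [Prod.ext_iff]
      conv_lhs => rw [hy]
      simp only [map_add, map_smul, smul_eq_mul, hv]
    obtain ⟨μ₀, hμ₀⟩ := hne
    have hu0 : f ((μ₀.1 : ℝ), (μ₀.2 : ℝ)) < u := hfu _ (hmemP μ₀ hμ₀)
    -- some normal has positive pairing with v
    have hpos : ∃ μ ∈ s, 0 < f ((μ.1 : ℝ), (μ.2 : ℝ)) := by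
      by_contra hcon
      push_neg at hcon
      have hvne : v ≠ 0 := by
        intro hv0
        have hfzero : ∀ y : ℝ × ℝ, f y = 0 := by
          intro y; rw [hfeval y, hv0]; simp
        rw [hfzero] at hux
        rw [hfzero] at hu0
        linarith
      have hvpos : 0 < ‖v‖ := norm_pos_iff.mpr hvne
      have hR0 : 0 ≤ R := by
        have h00 : ((0 : ℝ), (0 : ℝ)) ∈ Δ := interior_subset h0
        exact le_trans (norm_nonneg _) (hR _ h00)
      set t : ℝ := (R + 1) / ‖v‖ with ht
      have ht0 : 0 ≤ t := div_nonneg (by linarith) hvpos.le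
      have hyΔ : t • v ∈ Δ := by
        rw [hΔ]
        intro μ hμ
        have h1 : (t • v).1 * (μ.1 : ℝ) + (t • v).2 * (μ.2 : ℝ)
            = t * f ((μ.1 : ℝ), (μ.2 : ℝ)) := by
          rw [hfeval]; simp [smul_eq_mul]; ring
        rw [h1]
        have := hcon μ hμ
        nlinarith
      have hnorm : ‖t • v‖ = R + 1 := by
        rw [norm_smul, Real.norm_eq_abs, abs_of_nonneg ht0, ht,
          div_mul_cancel₀ _ (ne_of_gt hvpos)]
      have hcontr := hR _ hyΔ
      rw [hnorm] at hcontr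
      linarith
    obtain ⟨μ₁, hμ₁s, hμ₁⟩ := hpos
    have hu : 0 < u := lt_trans hμ₁ (hfu _ (hmemP μ₁ hμ₁s))
    set x : ℝ × ℝ := u⁻¹ • v with hx
    have hxΔ : x ∈ Δ := by
      rw [hΔ]
      intro μ hμ
      have h1 : x.1 * (μ.1 : ℝ) + x.2 * (μ.2 : ℝ) = u⁻¹ * f ((μ.1 : ℝ), (μ.2 : ℝ)) := by
        rw [hfeval]; simp [hx, smul_eq_mul]; ring
      rw [h1]
      have h2 : f ((μ.1 : ℝ), (μ.2 : ℝ)) < u := hfu _ (hmemP μ hμ)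
      rw [inv_mul_le_iff₀ hu, mul_one]
      exact le_of_lt h2
    have h3 : x.1 * (ξ.1 : ℝ) + x.2 * (ξ.2 : ℝ) = u⁻¹ * f ((ξ.1 : ℝ), (ξ.2 : ℝ)) := by
      rw [hfeval]; simp [hx, smul_eq_mul]; ring
    have h4 : 1 < x.1 * (ξ.1 : ℝ) + x.2 * (ξ.2 : ℝ) := by
      rw [h3]
      rw [lt_inv_mul_iff₀ hu, mul_one]
      exact hux
    exact lt_of_lt_of_le h4 (hle ξ x hxΔ)
  -- a ball around 0 inside Δ
  obtain ⟨r, hr, hball⟩ := Metric.mem_nhds_iff.mp (mem_interior_iff_mem_nhds.mp h0)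
  -- N : large cutoff
  set N : ℕ := ⌈4 / r⌉₊ with hN
  have hNr : 2 ≤ r / 2 * ((N : ℝ) + 1) := by
    have h1 : 4 / r ≤ (N : ℝ) := Nat.le_ceil _
    have h2 : 4 ≤ r * ((N : ℝ) + 1) := by
      rw [div_le_iff₀ hr] at h1
      nlinarith
    linarith
  -- large ξ have support value at least 2
  have hlarge : ∀ ξ : ℤ × ℤ, ((N : ℤ) < |ξ.1| ∨ (N : ℤ) < |ξ.2|) → 2 ≤ c ξ := by
    intro ξ hbig
    rcases hbig with hbig | hbig
    · set x : ℝ × ℝ := (if 0 ≤ ξ.1 then r / 2 else -(r / 2), 0) with hx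
      have hxΔ : x ∈ Δ := by
        apply hball
        rw [Metric.mem_ball]
        have : dist x ((0 : ℝ), (0 : ℝ)) = ‖x‖ := by
          rw [Prod.mk_zero_zero, dist_zero_right]
        rw [this, Prod.norm_def]
        simp only [hx, norm_zero, Real.norm_eq_abs]
        have habs : |if 0 ≤ ξ.1 then r / 2 else -(r / 2)| = r / 2 := by
          split
          · rw [abs_of_nonneg (by linarith : (0:ℝ) ≤ r / 2)]
          · rw [abs_of_nonpos (by linarith : -(r / 2) ≤ 0)]; ring
        rw [habs, max_eq_left (by linarith)]
        linarith
      have hval : x.1 * (ξ.1 : ℝ) + x.2 * (ξ.2 : ℝ) = r / 2 * |(ξ.1 : ℝ)| := by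
        simp only [hx]
        split
        · rename_i h
          rw [abs_of_nonneg (by exact_mod_cast h)]
          ring
        · rename_i h
          push_neg at h
          rw [abs_of_nonpos (by exact_mod_cast h.le)]
          ring
      have hcast : (N : ℝ) + 1 ≤ |(ξ.1 : ℝ)| := by
        rw [← Int.cast_abs]
        exact_mod_cast hbig
      have : 2 ≤ x.1 * (ξ.1 : ℝ) + x.2 * (ξ.2 : ℝ) := by
        rw [hval]
        nlinarith
      exact le_trans this (hle ξ x hxΔ)
    · set x : ℝ × ℝ := (0, if 0 ≤ ξ.2 then r / 2 else -(r / 2)) with hx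
      have hxΔ : x ∈ Δ := by
        apply hball
        rw [Metric.mem_ball]
        have : dist x ((0 : ℝ), (0 : ℝ)) = ‖x‖ := by
          rw [Prod.mk_zero_zero, dist_zero_right]
        rw [this, Prod.norm_def]
        simp only [hx, norm_zero, Real.norm_eq_abs]
        have habs : |if 0 ≤ ξ.2 then r / 2 else -(r / 2)| = r / 2 := by
          split
          · rw [abs_of_nonneg (by linarith : (0:ℝ) ≤ r / 2)]
          · rw [abs_of_nonpos (by linarith : -(r / 2) ≤ 0)]; ring
        rw [habs, max_eq_right (by linarith)]
        linarith
      have hval : x.1 * (ξ.1 : ℝ) + x.2 * (ξ.2 : ℝ) = r / 2 * |(ξ.2 : ℝ)| := by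
        simp only [hx]
        split
        · rename_i h
          rw [abs_of_nonneg (by exact_mod_cast h)]
          ring
        · rename_i h
          push_neg at h
          rw [abs_of_nonpos (by exact_mod_cast h.le)]
          ring
      have hcast : (N : ℝ) + 1 ≤ |(ξ.2 : ℝ)| := by
        rw [← Int.cast_abs]
        exact_mod_cast hbig
      have : 2 ≤ x.1 * (ξ.1 : ℝ) + x.2 * (ξ.2 : ℝ) := by
        rw [hval]
        nlinarith
      exact le_trans this (hle ξ x hxΔ)
  -- finite minimization
  set F : Finset (ℤ × ℤ) := Finset.Icc (-(N : ℤ), -(N : ℤ)) ((N : ℤ), (N : ℤ)) with hF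
  set F' : Finset (ℤ × ℤ) := F.filter (fun ξ => ((ξ.1 : ℝ), (ξ.2 : ℝ)) ∉ P) with hF'
  set S : Finset ℝ := insert 2 (F'.image c) with hS
  have hSne : S.Nonempty := ⟨2, Finset.mem_insert_self _ _⟩
  refine ⟨S.min' hSne, ?_, ?_⟩
  · have hall : ∀ a ∈ S, 1 < a := by
      intro a ha
      rw [hS, Finset.mem_insert] at ha
      rcases ha with h | h
      · rw [h]; norm_num
      · rw [Finset.mem_image] at h
        obtain ⟨ξ, hξF', hξeq⟩ := h
        rw [hF', Finset.mem_filter] at hξF'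
        rw [← hξeq]
        exact key ξ hξF'.2
    exact hall _ (S.min'_mem hSne)
  · intro ξ hξ
    show S.min' hSne ≤ c ξ
    by_cases hmemF : ξ ∈ F
    · apply Finset.min'_le
      rw [hS, Finset.mem_insert]
      right
      rw [Finset.mem_image]
      exact ⟨ξ, by rw [hF', Finset.mem_filter]; exact ⟨hmemF, hξ⟩, rfl⟩
    · have h2 : 2 ≤ c ξ := by
        apply hlarge
        rw [hF, Finset.mem_Icc] at hmemF
        by_contra hcon
        push_neg at hcon
        obtain ⟨h1, h2⟩ := hcon
        rw [abs_le] at h1 h2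
        exact hmemF ⟨⟨h1.1, h2.1⟩, ⟨h1.2, h2.2⟩⟩
      have hmin : S.min' hSne ≤ 2 := Finset.min'_le _ _ (Finset.mem_insert_self _ _)
      linarith
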